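/- Let F be a field, let m, n be positive integers, let A, C ∈ M_m(F) and B, D ∈ M_n(F) with B∘D = 0 (the Hadamard product of B and D is the zero matrix). Then det_1(A⊗B + C⊗D) = det_1(A⊗B) + det_1(C⊗D). -/

import Mathlib

open Matrix Kronecker

/-- The partial determinant `det₁`: for `A ∈ M_{mn}(F) = M_m(F) ⊗ M_n(F)`,
`det1 A` is the `n × n` matrix whose `(i,j)` entry is the determinant of the
block `A_{ij} ∈ M_m(F)` given by `(A_{ij})_{kl} = A (k,i) (l,j)`. -/
def det1 {F : Type*} [Field F] {m n : ℕ}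
    (A : Matrix (Fin m × Fin n) (Fin m × Fin n) F) : Matrix (Fin n) (Fin n) F :=
  Matrix.of fun i j => Matrix.det (Matrix.of fun k l : Fin m => A (k, i) (l, j))

/-- The `m`-th Hadamard (entrywise) power of a matrix. -/
def hpow {F : Type*} [Monoid F] {n : ℕ} (B : Matrix (Fin n) (Fin n) F) (m : ℕ) :
    Matrix (Fin n) (Fin n) F :=
  Matrix.of fun i j => (B i j) ^ m

/-- If `B ∘ D = 0` (Hadamard product), the partial determinant is additive on
`A ⊗ B + C ⊗ D`. -/
theorem det1_add_of_hadamard_eq_zero {F : Type*} [Field F] {m n : ℕ}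
    (hm : 0 < m) (hn : 0 < n)
    (A C : Matrix (Fin m) (Fin m) F) (B D : Matrix (Fin n) (Fin n) F)
    (h : Matrix.hadamard B D = 0) :
    det1 (A ⊗ₖ B + C ⊗ₖ D) = det1 (A ⊗ₖ B) + det1 (C ⊗ₖ D) := by
  ext i j
  have hBD : B i j * D i j = 0 := congrFun (congrFun h i) j
  have hne : Nonempty (Fin m) := ⟨⟨0, hm⟩⟩
  simp only [det1, of_apply, Matrix.add_apply, kroneckerMap_apply]
  rcases mul_eq_zero.mp hBD with hb | hd
  · have h1 : (Matrix.of fun k l : Fin m => A (k) (l) * B i j) = 0 := by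
      ext k l; simp [hb]
    have h2 : (Matrix.of fun k l : Fin m => A k l * B i j + C k l * D i j)
        = Matrix.of fun k l : Fin m => C k l * D i j := by
      ext k l; simp [hb]
    rw [h1, h2, Matrix.det_zero, zero_add]
  · have h1 : (Matrix.of fun k l : Fin m => C (k) (l) * D i j) = 0 := by
      ext k l; simp [hd]
    have h2 : (Matrix.of fun k l : Fin m => A k l * B i j + C k l * D i j)
        = Matrix.of fun k l : Fin m => A k l * B i j := by
      ext k l; simp [hd]
    rw [h1, h2, Matrix.det_zero, add_zero]
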